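/- Let X be a real (or complex) Banach space, ω > 0, and φ : ℝ → ℝ a twice continuously differentiable function with φ(0) = 1, φ'(0) = −1, satisfying in addition φ(s) ≤ 1 and φ(s) ≤ 1 − s + s²/2 for all s ≥ 0. Let u : ℝ → X be a twice continuously differentiable curve on [0, ∞) such that for all t ≥ 0 one has ‖u(t)‖ ≤ φ(ωt)·‖u(0)‖ and ‖u''(t)‖ ≤ φ''(ωt)·‖u''(0)‖. Then ‖u'(0)‖² ≤ 4·‖u(0)‖·‖u''(0)‖. -/

import Mathlib

/-- Inequality (1.6) of Theorem 1.1: the ω-localised Landau inequality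
‖u'(0)‖² ≤ 4‖u(0)‖‖u''(0)‖ for a C² orbit with quadratically decaying weight. -/
theorem landau_inequality_via_orbits
    {X : Type*} [NormedAddCommGroup X] [NormedSpace ℝ X] [CompleteSpace X]
    (ω : ℝ) (hω : 0 < ω)
    (φ : ℝ → ℝ) (hφ : ContDiff ℝ 2 φ) (hφ0 : φ 0 = 1) (hφ'0 : deriv φ 0 = -1)
    (hφle1 : ∀ s ≥ (0:ℝ), φ s ≤ 1)
    (hφquad : ∀ s ≥ (0:ℝ), φ s ≤ 1 - s + s ^ 2 / 2)
    (u u' u'' : ℝ → X)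
    (hu : ∀ t ∈ Set.Ici (0:ℝ), HasDerivWithinAt u (u' t) (Set.Ici 0) t)
    (hu' : ∀ t ∈ Set.Ici (0:ℝ), HasDerivWithinAt u' (u'' t) (Set.Ici 0) t)
    (hu'' : ContinuousOn u'' (Set.Ici 0))
    (hbound : ∀ t ≥ (0:ℝ), ‖u t‖ ≤ φ (ω * t) * ‖u 0‖)
    (hbound'' : ∀ t ≥ (0:ℝ), ‖u'' t‖ ≤ deriv (deriv φ) (ω * t) * ‖u'' 0‖) :
    ‖u' 0‖ ^ 2 ≤ 4 * ‖u 0‖ * ‖u'' 0‖ := by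
  set a := ‖u 0‖ with ha
  set b := ‖u' 0‖ with hb
  set c := ‖u'' 0‖ with hc
  -- regularity of φ
  have hφ2 : ContDiff ℝ (1 + 1) φ := by
    have : ((1 + 1 : ℕ) : WithTop ℕ∞) = 2 := by norm_num
    rw [show ((1:WithTop ℕ∞) + 1) = 2 by norm_num]
    exact hφ
  have hφd : ContDiff ℝ 1 (deriv φ) := (contDiff_succ_iff_deriv.mp hφ2).2.2
  have hφ'diff : Differentiable ℝ (deriv φ) := hφd.differentiable one_ne_zero
  have hφdiff : Differentiable ℝ φ := hφ2.differentiable (by norm_num)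
  have hφ''cont : Continuous (deriv (deriv φ)) := by
    have h01 : ContDiff ℝ (0 + 1) (deriv φ) := by rw [zero_add]; exact hφd
    exact ((contDiff_succ_iff_deriv.mp h01).2.2).continuous
  -- continuity of u, u' on Ici 0
  have hucont : ContinuousOn u (Set.Ici 0) := fun x hx => (hu x hx).continuousWithinAt
  have hu'cont : ContinuousOn u' (Set.Ici 0) := fun x hx => (hu' x hx).continuousWithinAt
  -- the main pointwise estimate
  have key : ∀ t : ℝ, 0 < t → t * b ≤ 2 * a + t ^ 2 / 2 * c := by
    intro t ht
    have ht' : (0:ℝ) ≤ t := ht.le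
    have hsub : Set.Icc (0:ℝ) t ⊆ Set.Ici 0 := fun x hx => hx.1
    -- Taylor formula with integral remainder
    have htay : ∫ s in (0:ℝ)..t, (t - s) • u'' s = u t - (u 0 + t • u' 0) := by
      have hgc : ContinuousOn (fun s => u s + (t - s) • u' s) (Set.Icc 0 t) := by
        apply ContinuousOn.add (hucont.mono hsub)
        exact ContinuousOn.smul (by fun_prop) (hu'cont.mono hsub)
      have hgd : ∀ x ∈ Set.Ioo (0:ℝ) t,
          HasDerivWithinAt (fun s => u s + (t - s) • u' s) ((t - x) • u'' x) (Set.Ioi x) x := by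
        intro x hx
        have hx0 : (0:ℝ) < x := hx.1
        have h1 : HasDerivAt u (u' x) x :=
          (hu x hx0.le).hasDerivAt (Ici_mem_nhds hx0)
        have h2 : HasDerivAt u' (u'' x) x :=
          (hu' x hx0.le).hasDerivAt (Ici_mem_nhds hx0)
        have h3 : HasDerivAt (fun s : ℝ => t - s) (-1) x := by
          simpa using (hasDerivAt_id x).const_sub t
        have h4 : HasDerivAt (fun s => u s + (t - s) • u' s)
            (u' x + ((t - x) • u'' x + (-1 : ℝ) • u' x)) x := h1.add (h3.smul h2)
        have : u' x + ((t - x) • u'' x + (-1 : ℝ) • u' x) = (t - x) • u'' x := by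
          simp [neg_one_smul]
        exact (this ▸ h4).hasDerivWithinAt
      have hint : IntervalIntegrable (fun s => (t - s) • u'' s) MeasureTheory.volume 0 t := by
        apply ContinuousOn.intervalIntegrable_of_Icc ht'
        exact ContinuousOn.smul (by fun_prop) (hu''.mono hsub)
      have := intervalIntegral.integral_eq_sub_of_hasDeriv_right_of_le ht' hgc hgd hint
      rw [this]
      simp
    -- norm estimate on the remainder integral
    have hrem : ‖∫ s in (0:ℝ)..t, (t - s) • u'' s‖ ≤ t ^ 2 / 2 * c := by
      have h1 : ‖∫ s in (0:ℝ)..t, (t - s) • u'' s‖ ≤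
          ∫ s in (0:ℝ)..t, ‖(t - s) • u'' s‖ :=
        intervalIntegral.norm_integral_le_integral_norm ht'
      have hint1 : IntervalIntegrable (fun s => ‖(t - s) • u'' s‖)
          MeasureTheory.volume 0 t := by
        apply ContinuousOn.intervalIntegrable_of_Icc ht'
        exact (ContinuousOn.smul (by fun_prop) (hu''.mono hsub)).norm
      have hint2 : IntervalIntegrable (fun s => (t - s) * (deriv (deriv φ) (ω * s) * c))
          MeasureTheory.volume 0 t := by
        apply ContinuousOn.intervalIntegrable_of_Icc ht'
        fun_prop
      have h2 : ∫ s in (0:ℝ)..t, ‖(t - s) • u'' s‖ ≤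
          ∫ s in (0:ℝ)..t, (t - s) * (deriv (deriv φ) (ω * s) * c) := by
        apply intervalIntegral.integral_mono_on ht' hint1 hint2
        intro x hx
        rw [norm_smul, Real.norm_eq_abs, abs_of_nonneg (by linarith [hx.2])]
        exact mul_le_mul_of_nonneg_left (hbound'' x hx.1) (by linarith [hx.2])
      -- compute the φ'' integral by FTC
      have hftc : ∫ s in (0:ℝ)..t, (t - s) * deriv (deriv φ) (ω * s)
          = φ (ω * t) / ω ^ 2 + t / ω - 1 / ω ^ 2 := by
        have hG : ∀ x ∈ Set.uIcc (0:ℝ) t,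
            HasDerivAt (fun s => (t - s) / ω * deriv φ (ω * s) + φ (ω * s) / ω ^ 2)
              ((t - x) * deriv (deriv φ) (ω * x)) x := by
          intro x _
          have hc1 : HasDerivAt (fun s : ℝ => ω * s) ω x := by
            simpa using (hasDerivAt_id x).const_mul ω
          have hd1 : HasDerivAt (fun s => deriv φ (ω * s))
              (deriv (deriv φ) (ω * x) * ω) x :=
            ((hφ'diff (ω * x)).hasDerivAt.comp x hc1)
          have hd0 : HasDerivAt (fun s => φ (ω * s)) (deriv φ (ω * x) * ω) x :=
            ((hφdiff (ω * x)).hasDerivAt.comp x hc1)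
          have hlin : HasDerivAt (fun s : ℝ => (t - s) / ω) (-(1 / ω)) x := by
            have : HasDerivAt (fun s : ℝ => (t - s) / ω) (-1 / ω) x := by
              simpa using ((hasDerivAt_id x).const_sub t).div_const ω
            simpa [neg_div] using this
          have := (hlin.mul hd1).add (hd0.div_const (ω ^ 2))
          refine this.congr_deriv ?_
          have hω0 : ω ≠ 0 := hω.ne'
          field_simp
          ring
        have hint3 : IntervalIntegrable (fun s => (t - s) * deriv (deriv φ) (ω * s))
            MeasureTheory.volume 0 t := by
          apply ContinuousOn.intervalIntegrable_of_Icc ht'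
          fun_prop
        rw [intervalIntegral.integral_eq_sub_of_hasDerivAt hG hint3]
        rw [mul_zero, hφ0, hφ'0]
        field_simp
        ring
      have h3 : ∫ s in (0:ℝ)..t, (t - s) * (deriv (deriv φ) (ω * s) * c)
          = (φ (ω * t) / ω ^ 2 + t / ω - 1 / ω ^ 2) * c := by
        rw [← hftc, ← intervalIntegral.integral_mul_const]
        congr 1; ext s; ring
      have h4 : φ (ω * t) / ω ^ 2 + t / ω - 1 / ω ^ 2 ≤ t ^ 2 / 2 := by
        have hq := hφquad (ω * t) (by positivity)
        have hω2 : (0:ℝ) < ω ^ 2 := by positivity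
        have h5 : φ (ω * t) + ω * t - 1 ≤ ω ^ 2 * t ^ 2 / 2 := by nlinarith
        calc φ (ω * t) / ω ^ 2 + t / ω - 1 / ω ^ 2
            = (φ (ω * t) + ω * t - 1) / ω ^ 2 := by field_simp
          _ ≤ (ω ^ 2 * t ^ 2 / 2) / ω ^ 2 := by gcongr
          _ = t ^ 2 / 2 := by field_simp
      calc ‖∫ s in (0:ℝ)..t, (t - s) • u'' s‖
          ≤ ∫ s in (0:ℝ)..t, (t - s) * (deriv (deriv φ) (ω * s) * c) := h1.trans h2
        _ = (φ (ω * t) / ω ^ 2 + t / ω - 1 / ω ^ 2) * c := h3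
        _ ≤ t ^ 2 / 2 * c := mul_le_mul_of_nonneg_right h4 (norm_nonneg _)
    -- put it together
    have hut : ‖u t‖ ≤ a := (hbound t ht').trans
      (by nlinarith [hφle1 (ω * t) (by positivity), norm_nonneg (u 0)])
    have : t • u' 0 = (u t - u 0) - ∫ s in (0:ℝ)..t, (t - s) • u'' s := by
      rw [htay]; abel
    have hnorm : t * b = ‖t • u' 0‖ := by
      rw [norm_smul, Real.norm_eq_abs, abs_of_pos ht]
    rw [hnorm, this]
    calc ‖(u t - u 0) - ∫ s in (0:ℝ)..t, (t - s) • u'' s‖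
        ≤ ‖u t - u 0‖ + ‖∫ s in (0:ℝ)..t, (t - s) • u'' s‖ := norm_sub_le _ _
      _ ≤ (‖u t‖ + ‖u 0‖) + t ^ 2 / 2 * c := add_le_add (norm_sub_le _ _) hrem
      _ ≤ 2 * a + t ^ 2 / 2 * c := by rw [← ha]; linarith [hut]
  -- conclude by the discriminant argument
  have hquad : ∀ x : ℝ, 0 ≤ c * (x * x) + (-(2 * b)) * x + 4 * a := by
    intro x
    rcases le_or_gt x 0 with hx | hx
    · have hbnn : 0 ≤ b := norm_nonneg _
      have hcnn : 0 ≤ c := norm_nonneg _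
      have hann : 0 ≤ a := norm_nonneg _
      nlinarith
    · have := key x hx
      nlinarith
  have := discrim_le_zero hquad
  rw [discrim] at this
  nlinarith [this]
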